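/- arXiv:2509.22004 — 2 statements merged into one kernel-verified Lean document; each statement's English description precedes it below -/
import Mathlib

section
/- For any real matrix M and any unit vectors u, v (with ‖u‖₂ = ‖v‖₂ = 1), and any factorization M = AB, the trace norm of (u vᵀ) ∘ M is at most ‖A‖_r · ‖B‖_c, where ‖A‖_r is the max row ℓ₂-norm of A and ‖B‖_c the max column ℓ₂-norm of B. Hence γ₂(M) ≥ max_{u,v unit} ‖(u vᵀ) ∘ M‖_tr. -/
open Matrix Finset

noncomputable def rowNormMax {X J : Type*} [Fintype J] (A : Matrix X J ℝ) : ℝ :=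
  ⨆ i, Real.sqrt (∑ j, A i j ^ 2)

noncomputable def colNormMax {J Y : Type*} [Fintype J] (B : Matrix J Y ℝ) : ℝ :=
  ⨆ j, Real.sqrt (∑ i, B i j ^ 2)

/-- The `γ₂` (factorization) norm of a real matrix. -/
noncomputable def gamma2 {X Y : Type*} [Fintype X] [Fintype Y] (M : Matrix X Y ℝ) : ℝ :=
  sInf {c | ∃ (r : ℕ) (A : Matrix X (Fin r) ℝ) (B : Matrix (Fin r) Y ℝ),
    M = A * B ∧ c = rowNormMax A * colNormMax B}

/-- The trace (nuclear) norm: the sum of the singular values of `M`,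
i.e. the square roots of the eigenvalues of `Mᴴ * M`. -/
noncomputable def traceNorm {m n : ℕ} (M : Matrix (Fin m) (Fin n) ℝ) : ℝ :=
  ∑ i, Real.sqrt ((Matrix.isHermitian_conjTranspose_mul_self M).eigenvalues i)

section aux

lemma dot_sum_left {ι κ : Type*} [Fintype ι] [Fintype κ] (f : κ → ι → ℝ) (v : ι → ℝ) :
    (∑ k, f k) ⬝ᵥ v = ∑ k, f k ⬝ᵥ v := by
  simp only [dotProduct, Finset.sum_apply, Finset.sum_mul]
  exact Finset.sum_comm

lemma dot_sum_right {ι κ : Type*} [Fintype ι] [Fintype κ] (v : ι → ℝ) (f : κ → ι → ℝ) :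
    v ⬝ᵥ (∑ k, f k) = ∑ k, v ⬝ᵥ f k := by
  simp only [dotProduct, Finset.sum_apply, Finset.mul_sum]
  exact Finset.sum_comm

/-- Bessel-type inequality for a pairwise-orthogonal family of vectors of norm at most 1. -/
lemma bessel_aux {m n : ℕ} (x : Fin n → Fin m → ℝ)
    (horth : ∀ s t, s ≠ t → x s ⬝ᵥ x t = 0)
    (hnorm : ∀ s, x s ⬝ᵥ x s ≤ 1) (w : Fin m → ℝ) :
    ∑ s, (x s ⬝ᵥ w) ^ 2 ≤ w ⬝ᵥ w := by
  classical
  set c : Fin n → ℝ := fun s => x s ⬝ᵥ w with hc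
  set p : Fin m → ℝ := ∑ s, c s • x s with hp
  have h0 : 0 ≤ (w - p) ⬝ᵥ (w - p) := Finset.sum_nonneg fun i _ => mul_self_nonneg _
  have hwp : w ⬝ᵥ p = ∑ s, c s ^ 2 := by
    rw [hp, dot_sum_right]
    refine Finset.sum_congr rfl fun s _ => ?_
    rw [dotProduct_smul, smul_eq_mul, dotProduct_comm, sq]
  have hpw : p ⬝ᵥ w = ∑ s, c s ^ 2 := by
    rw [hp, dot_sum_left]
    refine Finset.sum_congr rfl fun s _ => ?_
    rw [smul_dotProduct, smul_eq_mul, sq]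
  have hpp : p ⬝ᵥ p = ∑ s, c s ^ 2 * (x s ⬝ᵥ x s) := by
    rw [hp, dot_sum_left]
    refine Finset.sum_congr rfl fun s _ => ?_
    rw [smul_dotProduct, dot_sum_right, smul_eq_mul]
    rw [Finset.sum_eq_single s
      (fun t _ hts => by rw [dotProduct_smul, horth s t (Ne.symm hts)]; simp)
      (by simp)]
    rw [dotProduct_smul, smul_eq_mul]; ring
  have hpple : ∑ s, c s ^ 2 * (x s ⬝ᵥ x s) ≤ ∑ s, c s ^ 2 := by
    refine Finset.sum_le_sum fun s _ => ?_
    calc c s ^ 2 * (x s ⬝ᵥ x s) ≤ c s ^ 2 * 1 :=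
          mul_le_mul_of_nonneg_left (hnorm s) (sq_nonneg _)
      _ = c s ^ 2 := mul_one _
  have hexp : (w - p) ⬝ᵥ (w - p)
      = w ⬝ᵥ w - 2 * (∑ s, c s ^ 2) + ∑ s, c s ^ 2 * (x s ⬝ᵥ x s) := by
    rw [sub_dotProduct, dotProduct_sub, dotProduct_sub, hwp, hpw, hpp]; ring
  rw [hexp] at h0
  linarith

end aux

/-- For unit vectors `u`, `v` and any factorization `M = A * B`, the trace norm of
`(u vᵀ) ∘ M` is at most `‖A‖_r · ‖B‖_c`; hence `γ₂(M)` dominates the supremum of these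
trace norms over all unit vectors. -/
theorem traceNorm_hadamard_le_gamma2 {m n : ℕ} (M : Matrix (Fin m) (Fin n) ℝ) :
    (∀ (u : Fin m → ℝ) (v : Fin n → ℝ),
      Real.sqrt (∑ i, u i ^ 2) = 1 → Real.sqrt (∑ j, v j ^ 2) = 1 →
      ∀ (r : ℕ) (A : Matrix (Fin m) (Fin r) ℝ) (B : Matrix (Fin r) (Fin n) ℝ),
        M = A * B →
        traceNorm (Matrix.hadamard (Matrix.vecMulVec u v) M) ≤ rowNormMax A * colNormMax B) ∧
    sSup {t : ℝ | ∃ (u : Fin m → ℝ) (v : Fin n → ℝ),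
        Real.sqrt (∑ i, u i ^ 2) = 1 ∧ Real.sqrt (∑ j, v j ^ 2) = 1 ∧
        t = traceNorm (Matrix.hadamard (Matrix.vecMulVec u v) M)} ≤ gamma2 M := by
  classical
  have main : ∀ (u : Fin m → ℝ) (v : Fin n → ℝ),
      Real.sqrt (∑ i, u i ^ 2) = 1 → Real.sqrt (∑ j, v j ^ 2) = 1 →
      ∀ (r : ℕ) (A : Matrix (Fin m) (Fin r) ℝ) (B : Matrix (Fin r) (Fin n) ℝ),
        M = A * B →
        traceNorm (Matrix.hadamard (Matrix.vecMulVec u v) M) ≤ rowNormMax A * colNormMax B := by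
    intro u v hu hv r A B hM
    set N : Matrix (Fin m) (Fin n) ℝ := Matrix.hadamard (Matrix.vecMulVec u v) M with hNdef
    have hN := Matrix.isHermitian_conjTranspose_mul_self N
    set lam : Fin n → ℝ := hN.eigenvalues with hlam
    set e : Fin n → (Fin n → ℝ) := fun s => ⇑(hN.eigenvectorBasis s) with he
    have hlam_nonneg : ∀ s, 0 ≤ lam s := fun s =>
      Matrix.eigenvalues_conjTranspose_mul_self_nonneg N s
    have husq : (∑ i, u i ^ 2) = 1 := by
      have h0 : (0:ℝ) ≤ ∑ i, u i ^ 2 := Finset.sum_nonneg fun i _ => sq_nonneg _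
      calc (∑ i, u i ^ 2) = Real.sqrt (∑ i, u i ^ 2) ^ 2 := (Real.sq_sqrt h0).symm
        _ = 1 := by rw [hu]; norm_num
    have hvsq : (∑ j, v j ^ 2) = 1 := by
      have h0 : (0:ℝ) ≤ ∑ j, v j ^ 2 := Finset.sum_nonneg fun j _ => sq_nonneg _
      calc (∑ j, v j ^ 2) = Real.sqrt (∑ j, v j ^ 2) ^ 2 := (Real.sq_sqrt h0).symm
        _ = 1 := by rw [hv]; norm_num
    -- orthonormality of eigenvectors, as dot products
    have horthe : ∀ s t, e s ⬝ᵥ e t = if s = t then 1 else 0 := by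
      intro s t
      have := orthonormal_iff_ite.mp hN.eigenvectorBasis.orthonormal s t
      rw [EuclideanSpace.inner_eq_star_dotProduct] at this
      rw [dotProduct_comm]; simpa [dotProduct, he] using this
    -- Parseval
    have hparseval : ∀ w : Fin n → ℝ, ∑ s, (w ⬝ᵥ e s) ^ 2 = w ⬝ᵥ w := by
      intro w
      have := hN.eigenvectorBasis.sum_inner_mul_inner
        ((WithLp.equiv 2 (Fin n → ℝ)).symm w) ((WithLp.equiv 2 (Fin n → ℝ)).symm w)
      simp only [EuclideanSpace.inner_eq_star_dotProduct] at this
      calc ∑ s, (w ⬝ᵥ e s) ^ 2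
          = ∑ s, (w ⬝ᵥ e s) * (e s ⬝ᵥ w) := by
            refine Finset.sum_congr rfl fun s _ => ?_
            rw [sq, dotProduct_comm (e s) w]
        _ = w ⬝ᵥ w := by
            simp_rw [mul_comm (w ⬝ᵥ _)]; simpa [dotProduct, WithLp.equiv, he] using this
    -- eigen equations as dot products
    have hK1 : ∀ s t, (N *ᵥ e s) ⬝ᵥ (N *ᵥ e t) = lam s * (e s ⬝ᵥ e t) := by
      intro s t
      have heig : (Nᴴ * N) *ᵥ e s = lam s • e s := hN.mulVec_eigenvectorBasis s
      calc (N *ᵥ e s) ⬝ᵥ (N *ᵥ e t)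
          = ((Nᵀ * N) *ᵥ e s) ⬝ᵥ e t := by
            rw [dotProduct_mulVec, ← mulVec_transpose, mulVec_mulVec]
        _ = (lam s • e s) ⬝ᵥ e t := by
            rw [show Nᵀ = Nᴴ from (Matrix.conjTranspose_eq_transpose_of_trivial N).symm, heig]
        _ = lam s * (e s ⬝ᵥ e t) := by rw [smul_dotProduct, smul_eq_mul]
    have hK2 : ∀ s, (N *ᵥ e s) ⬝ᵥ (N *ᵥ e s) = lam s := by
      intro s; rw [hK1 s s, horthe s s]; simp
    -- the (sub)orthonormal left vectors
    set x : Fin n → (Fin m → ℝ) :=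
      fun s => if lam s = 0 then 0 else (Real.sqrt (lam s))⁻¹ • (N *ᵥ e s) with hx
    have hsqrt_ne : ∀ s, lam s ≠ 0 → Real.sqrt (lam s) ≠ 0 := fun s hs =>
      Real.sqrt_ne_zero'.mpr (lt_of_le_of_ne (hlam_nonneg s) (Ne.symm hs))
    have hx_orth : ∀ s t, s ≠ t → x s ⬝ᵥ x t = 0 := by
      intro s t hst
      by_cases h1 : lam s = 0
      · simp [hx, h1]
      by_cases h2 : lam t = 0
      · simp [hx, h1, h2]
      · simp only [hx, if_neg h1, if_neg h2, smul_dotProduct, dotProduct_smul,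
          smul_eq_mul]
        rw [hK1 s t, horthe s t, if_neg hst]
        ring
    have hx_norm : ∀ s, x s ⬝ᵥ x s ≤ 1 := by
      intro s
      by_cases h1 : lam s = 0
      · simp [hx, h1]
      · simp only [hx, if_neg h1, smul_dotProduct, dotProduct_smul, smul_eq_mul, hK2 s]
        rw [show (Real.sqrt (lam s))⁻¹ * ((Real.sqrt (lam s))⁻¹ * lam s)
            = lam s / (Real.sqrt (lam s) * Real.sqrt (lam s)) by ring]
        rw [Real.mul_self_sqrt (hlam_nonneg s), div_self h1]
    have hK3 : ∀ s, Real.sqrt (lam s) = x s ⬝ᵥ (N *ᵥ e s) := by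
      intro s
      by_cases h1 : lam s = 0
      · simp [hx, h1]
      · simp only [hx, if_neg h1, smul_dotProduct, smul_eq_mul, hK2 s]
        rw [inv_mul_eq_div, eq_div_iff (hsqrt_ne s h1), Real.mul_self_sqrt (hlam_nonneg s)]
    -- the decomposition vectors
    set a : Fin r → (Fin m → ℝ) := fun k i => u i * A i k with ha
    set w : Fin r → (Fin n → ℝ) := fun k j => v j * B k j with hw
    set c : Fin r → Fin n → ℝ := fun k s => w k ⬝ᵥ e s with hcdef
    have hNv : ∀ s i, (N *ᵥ e s) i = ∑ k, a k i * c k s := by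
      intro s i
      have : (N *ᵥ e s) i = ∑ j, (u i * v j * ∑ k, A i k * B k j) * e s j := by
        simp [Matrix.mulVec, dotProduct, hNdef, Matrix.hadamard_apply,
          Matrix.vecMulVec_apply, hM, Matrix.mul_apply]
      rw [this]
      calc ∑ j, (u i * v j * ∑ k, A i k * B k j) * e s j
          = ∑ j, ∑ k, (u i * A i k) * ((v j * B k j) * e s j) := by
            refine Finset.sum_congr rfl fun j _ => ?_
            rw [Finset.mul_sum, Finset.sum_mul]
            exact Finset.sum_congr rfl fun k _ => by ring
        _ = ∑ k, ∑ j, (u i * A i k) * ((v j * B k j) * e s j) := Finset.sum_comm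
        _ = ∑ k, a k i * c k s := by
            refine Finset.sum_congr rfl fun k _ => ?_
            rw [← Finset.mul_sum]
            rfl
    have hmain_term : ∀ s, x s ⬝ᵥ (N *ᵥ e s) = ∑ k, (x s ⬝ᵥ a k) * c k s := by
      intro s
      calc x s ⬝ᵥ (N *ᵥ e s) = ∑ i, x s i * ∑ k, a k i * c k s := by
            refine Finset.sum_congr rfl fun i _ => ?_
            rw [hNv s i]
        _ = ∑ i, ∑ k, (x s i * a k i) * c k s := by
            refine Finset.sum_congr rfl fun i _ => ?_
            rw [Finset.mul_sum]
            exact Finset.sum_congr rfl fun k _ => by ring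
        _ = ∑ k, ∑ i, (x s i * a k i) * c k s := Finset.sum_comm
        _ = ∑ k, (x s ⬝ᵥ a k) * c k s := by
            refine Finset.sum_congr rfl fun k _ => ?_
            rw [← Finset.sum_mul]
            rfl
    -- nonnegativity of the norms
    have hR : (0:ℝ) ≤ rowNormMax A := Real.iSup_nonneg fun i => Real.sqrt_nonneg _
    have hC : (0:ℝ) ≤ colNormMax B := Real.iSup_nonneg fun j => Real.sqrt_nonneg _
    -- bounds for the two sums
    have hAsum : ∑ k, ∑ s, (x s ⬝ᵥ a k) ^ 2 ≤ rowNormMax A ^ 2 := by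
      have h1 : ∀ k, ∑ s, (x s ⬝ᵥ a k) ^ 2 ≤ a k ⬝ᵥ a k :=
        fun k => bessel_aux x hx_orth hx_norm (a k)
      calc ∑ k, ∑ s, (x s ⬝ᵥ a k) ^ 2 ≤ ∑ k, a k ⬝ᵥ a k :=
            Finset.sum_le_sum fun k _ => h1 k
        _ = ∑ i, u i ^ 2 * ∑ k, A i k ^ 2 := by
            simp only [dotProduct, ha]
            rw [Finset.sum_comm]
            refine Finset.sum_congr rfl fun i _ => ?_
            rw [Finset.mul_sum]
            exact Finset.sum_congr rfl fun k _ => by ring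
        _ ≤ ∑ i, u i ^ 2 * rowNormMax A ^ 2 := by
            refine Finset.sum_le_sum fun i _ => ?_
            refine mul_le_mul_of_nonneg_left ?_ (sq_nonneg _)
            have h2 : Real.sqrt (∑ k, A i k ^ 2) ≤ rowNormMax A := by
              rw [rowNormMax]
              exact le_ciSup (f := fun i => Real.sqrt (∑ j, A i j ^ 2))
                (Set.Finite.bddAbove (Set.finite_range _)) i
            calc ∑ k, A i k ^ 2
                = Real.sqrt (∑ k, A i k ^ 2) ^ 2 :=
                  (Real.sq_sqrt (Finset.sum_nonneg fun k _ => sq_nonneg _)).symm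
              _ ≤ rowNormMax A ^ 2 := pow_le_pow_left₀ (Real.sqrt_nonneg _) h2 2
        _ = rowNormMax A ^ 2 := by rw [← Finset.sum_mul, husq, one_mul]
    have hBsum : ∑ k, ∑ s, c k s ^ 2 ≤ colNormMax B ^ 2 := by
      have h1 : ∀ k, ∑ s, c k s ^ 2 = w k ⬝ᵥ w k := fun k => hparseval (w k)
      calc ∑ k, ∑ s, c k s ^ 2 = ∑ k, w k ⬝ᵥ w k :=
            Finset.sum_congr rfl fun k _ => h1 k
        _ = ∑ j, v j ^ 2 * ∑ k, B k j ^ 2 := by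
            simp only [dotProduct, hw]
            rw [Finset.sum_comm]
            refine Finset.sum_congr rfl fun j _ => ?_
            rw [Finset.mul_sum]
            exact Finset.sum_congr rfl fun k _ => by ring
        _ ≤ ∑ j, v j ^ 2 * colNormMax B ^ 2 := by
            refine Finset.sum_le_sum fun j _ => ?_
            refine mul_le_mul_of_nonneg_left ?_ (sq_nonneg _)
            have h2 : Real.sqrt (∑ k, B k j ^ 2) ≤ colNormMax B := by
              rw [colNormMax]
              exact le_ciSup (f := fun j => Real.sqrt (∑ i, B i j ^ 2))
                (Set.Finite.bddAbove (Set.finite_range _)) j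
            calc ∑ k, B k j ^ 2
                = Real.sqrt (∑ k, B k j ^ 2) ^ 2 :=
                  (Real.sq_sqrt (Finset.sum_nonneg fun k _ => sq_nonneg _)).symm
              _ ≤ colNormMax B ^ 2 := pow_le_pow_left₀ (Real.sqrt_nonneg _) h2 2
        _ = colNormMax B ^ 2 := by rw [← Finset.sum_mul, hvsq, one_mul]
    -- the chain
    calc traceNorm N = ∑ s, Real.sqrt (lam s) := rfl
      _ = ∑ s, ∑ k, (x s ⬝ᵥ a k) * c k s := by
          refine Finset.sum_congr rfl fun s _ => ?_
          rw [hK3 s, hmain_term s]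
      _ = ∑ k, ∑ s, (x s ⬝ᵥ a k) * c k s := Finset.sum_comm
      _ ≤ ∑ k, Real.sqrt (∑ s, (x s ⬝ᵥ a k) ^ 2) * Real.sqrt (∑ s, c k s ^ 2) :=
          Finset.sum_le_sum fun k _ => Real.sum_mul_le_sqrt_mul_sqrt _ _ _
      _ ≤ Real.sqrt (∑ k, ∑ s, (x s ⬝ᵥ a k) ^ 2) * Real.sqrt (∑ k, ∑ s, c k s ^ 2) := by
          have := Real.sum_mul_le_sqrt_mul_sqrt Finset.univ
            (fun k => Real.sqrt (∑ s, (x s ⬝ᵥ a k) ^ 2))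
            (fun k => Real.sqrt (∑ s, c k s ^ 2))
          calc ∑ k, Real.sqrt (∑ s, (x s ⬝ᵥ a k) ^ 2) * Real.sqrt (∑ s, c k s ^ 2)
              ≤ Real.sqrt (∑ k, Real.sqrt (∑ s, (x s ⬝ᵥ a k) ^ 2) ^ 2) *
                Real.sqrt (∑ k, Real.sqrt (∑ s, c k s ^ 2) ^ 2) := this
            _ = Real.sqrt (∑ k, ∑ s, (x s ⬝ᵥ a k) ^ 2) * Real.sqrt (∑ k, ∑ s, c k s ^ 2) := by
                congr 1 <;> · congr 1
                              exact Finset.sum_congr rfl fun k _ =>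
                                Real.sq_sqrt (Finset.sum_nonneg fun s _ => sq_nonneg _)
      _ ≤ Real.sqrt (rowNormMax A ^ 2) * Real.sqrt (colNormMax B ^ 2) := by
          refine mul_le_mul (Real.sqrt_le_sqrt hAsum) (Real.sqrt_le_sqrt hBsum)
            (Real.sqrt_nonneg _) (Real.sqrt_nonneg _)
      _ = rowNormMax A * colNormMax B := by
          rw [Real.sqrt_sq hR, Real.sqrt_sq hC]
  refine ⟨main, ?_⟩
  have hg2 : 0 ≤ gamma2 M := by
    refine Real.sInf_nonneg fun t ht => ?_
    obtain ⟨r, A, B, -, rfl⟩ := ht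
    exact mul_nonneg (Real.iSup_nonneg fun i => Real.sqrt_nonneg _)
      (Real.iSup_nonneg fun j => Real.sqrt_nonneg _)
  refine Real.sSup_le ?_ hg2
  rintro t ⟨u, v, hu, hv, rfl⟩
  refine le_csInf ⟨rowNormMax M * colNormMax (1 : Matrix (Fin n) (Fin n) ℝ),
    n, M, 1, (Matrix.mul_one M).symm, rfl⟩ ?_
  rintro b ⟨r, A, B, hAB, rfl⟩
  exact main u v hu hv r A B hAB
end

section
/- The γ₂ norm of a matrix M equals the γ₂ norm of M restricted via equality: if two matrices are equal then their γ₂ norms are equal, and γ₂(M) ≤ √(rank(M)) for any sign matrix M (entries ±1). -/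
open Matrix Finset

open scoped Topology

variable {m n r : ℕ}

lemma rowNormMax_nonneg {X J : Type*} [Fintype J] (A : Matrix X J ℝ) : 0 ≤ rowNormMax A :=
  Real.iSup_nonneg fun _ => Real.sqrt_nonneg _

lemma colNormMax_nonneg {J Y : Type*} [Fintype J] (B : Matrix J Y ℝ) : 0 ≤ colNormMax B :=
  Real.iSup_nonneg fun _ => Real.sqrt_nonneg _

lemma gamma2_bddBelow {X Y : Type*} [Fintype X] [Fintype Y] (M : Matrix X Y ℝ) :
    BddBelow {c | ∃ (r : ℕ) (A : Matrix X (Fin r) ℝ) (B : Matrix (Fin r) Y ℝ),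
      M = A * B ∧ c = rowNormMax A * colNormMax B} := by
  refine ⟨0, fun c hc => ?_⟩
  obtain ⟨r, A, B, -, rfl⟩ := hc
  exact mul_nonneg (rowNormMax_nonneg A) (colNormMax_nonneg B)

lemma diag_AXAH (A : Matrix (Fin m) (Fin r) ℝ) (N : Matrix (Fin r) (Fin r) ℝ) (i : Fin m) :
    (A * N * Aᴴ) i i = A i ⬝ᵥ N *ᵥ A i := by
  simp only [mul_apply, conjTranspose_apply, dotProduct, mulVec, star_trivial,
    Finset.sum_mul, Finset.mul_sum]
  rw [Finset.sum_comm]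
  refine Finset.sum_congr rfl fun k _ => ?_
  refine Finset.sum_congr rfl fun l _ => ?_
  ring

lemma diag_BHXB (B : Matrix (Fin r) (Fin n) ℝ) (N : Matrix (Fin r) (Fin r) ℝ) (j : Fin n) :
    (Bᴴ * N * B) j j = (fun k => B k j) ⬝ᵥ N *ᵥ (fun k => B k j) := by
  simp only [mul_apply, conjTranspose_apply, dotProduct, mulVec, star_trivial,
    Finset.sum_mul, Finset.mul_sum]
  rw [Finset.sum_comm]
  refine Finset.sum_congr rfl fun k _ => ?_
  refine Finset.sum_congr rfl fun l _ => ?_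
  ring

lemma poly_ineq {r : ℕ} (hr : 1 ≤ r) {q : ℝ}
    (hq : ∀ t : ℝ, t ∈ Set.Ioo (0:ℝ) 1 → (1-t)^(r-1) * (1 + t*(q-1)) ≤ 1) : q ≤ r := by
  set g : ℝ → ℝ := fun t => (1-t)^(r-1) * (1 + t*(q-1)) with hgdef
  have hd : HasDerivAt g (q - r) 0 := by
    have h1 : HasDerivAt (fun t : ℝ => (1-t)^(r-1)) (-((r:ℝ)-1)) 0 := by
      have := ((hasDerivAt_id (0:ℝ)).const_sub 1).fun_pow (r-1)
      simpa [Nat.cast_sub hr] using this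
    have h2 : HasDerivAt (fun t : ℝ => 1 + t*(q-1)) (q-1) 0 := by
      simpa using ((hasDerivAt_id (0:ℝ)).mul_const (q-1)).const_add 1
    have := h1.mul h2
    simp only [hgdef]
    exact this.congr_deriv (by ring)
  have htend : Filter.Tendsto (slope g 0) (𝓝[>] (0:ℝ)) (𝓝 (q - r)) :=
    (hasDerivAt_iff_tendsto_slope.mp hd).mono_left
      (nhdsWithin_mono _ (fun x hx => ne_of_gt hx))
  have hle : ∀ᶠ t in 𝓝[>] (0:ℝ), slope g 0 t ≤ 0 := by
    filter_upwards [Ioo_mem_nhdsGT_of_mem (Set.mem_Ico.mpr ⟨le_refl (0:ℝ), zero_lt_one⟩)] with t ht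
    have h1 : g t ≤ 1 := hq t ht
    have hg0 : g 0 = 1 := by simp [hgdef]
    rw [slope_def_field]
    rw [hg0]
    exact div_nonpos_of_nonpos_of_nonneg (by linarith) (by simpa using ht.1.le)
  have := le_of_tendsto htend hle
  linarith
lemma smul_vecMulVec {r : ℕ} (c : ℝ) (u v : Fin r → ℝ) :
    vecMulVec (c • u) v = c • vecMulVec u v := by
  ext i j; simp [vecMulVec_apply, mul_assoc]

lemma det_convex_comb {r : ℕ} (S : Matrix (Fin r) (Fin r) ℝ) (hS : IsUnit S.det)
    (a : Fin r → ℝ) {t : ℝ} (ht : t ∈ Set.Ico (0:ℝ) 1) :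
    ((1-t) • S + t • vecMulVec a a).det
      = S.det * ((1-t)^r * (1 + (t/(1-t)) * (a ⬝ᵥ S⁻¹ *ᵥ a))) := by
  have h1t : (0:ℝ) < 1 - t := by linarith [ht.2]
  have h1 : (1-t) • S + t • vecMulVec a a
      = S * ((1-t) • (1 : Matrix (Fin r) (Fin r) ℝ) + t • (S⁻¹ * vecMulVec a a)) := by
    rw [Matrix.mul_add, mul_smul_comm, mul_smul_comm, Matrix.mul_one,
      Matrix.mul_nonsing_inv_cancel_left _ _ hS]
  have hP : S⁻¹ * vecMulVec a a = vecMulVec (S⁻¹ *ᵥ a) a := by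
    rw [vecMulVec_eq Unit, vecMulVec_eq Unit, ← Matrix.mul_assoc, ← replicateCol_mulVec]
  have h2 : (1-t) • (1 : Matrix (Fin r) (Fin r) ℝ) + t • vecMulVec (S⁻¹ *ᵥ a) a
      = (1-t) • ((1 : Matrix (Fin r) (Fin r) ℝ) + vecMulVec ((t/(1-t)) • (S⁻¹ *ᵥ a)) a) := by
    rw [_root_.smul_vecMulVec, smul_add, smul_smul]
    congr 2
    field_simp
  rw [h1, det_mul, hP, h2, det_smul]
  rw [Fintype.card_fin, vecMulVec_eq Unit, det_one_add_replicateCol_mul_replicateRow]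
  simp only [dotProduct_smul, smul_eq_mul]
variable {m r : ℕ}

noncomputable def Sig (A : Matrix (Fin m) (Fin r) ℝ) (lam : Fin m → ℝ) :
    Matrix (Fin r) (Fin r) ℝ :=
  ∑ i, lam i • vecMulVec (A i) (A i)

lemma sig_apply (A : Matrix (Fin m) (Fin r) ℝ) (lam : Fin m → ℝ) (k l : Fin r) :
    Sig A lam k l = ∑ i, lam i * (A i k * A i l) := by
  rw [Sig, Matrix.sum_apply]
  refine Finset.sum_congr rfl fun i _ => ?_
  simp [vecMulVec_apply]

lemma sig_mulVec (A : Matrix (Fin m) (Fin r) ℝ) (lam : Fin m → ℝ) (x : Fin r → ℝ) :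
    (Sig A lam) *ᵥ x = ∑ i, (lam i * (A i ⬝ᵥ x)) • A i := by
  have hsum : (∑ i, lam i • vecMulVec (A i) (A i)) *ᵥ x
      = ∑ i, (lam i • vecMulVec (A i) (A i)) *ᵥ x :=
    map_sum (Matrix.mulVec.addMonoidHomLeft x) _ Finset.univ
  rw [Sig, hsum]
  refine Finset.sum_congr rfl fun i _ => ?_
  show (lam i • vecMulVec (A i) (A i)) *ᵥ x = _
  funext k
  simp only [Matrix.smul_apply, vecMulVec_apply, mulVec, dotProduct, smul_eq_mul,
    Pi.smul_apply, Finset.sum_mul, Finset.mul_sum]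
  refine Finset.sum_congr rfl fun l _ => ?_
  ring

lemma dotProduct_sum' {N : ℕ} (x : Fin r → ℝ) (f : Fin N → Fin r → ℝ) :
    x ⬝ᵥ (∑ i, f i) = ∑ i, x ⬝ᵥ f i := by
  simp only [dotProduct, Finset.sum_apply, Finset.mul_sum]
  exact Finset.sum_comm

lemma sig_quad (A : Matrix (Fin m) (Fin r) ℝ) (lam : Fin m → ℝ) (x : Fin r → ℝ) :
    x ⬝ᵥ (Sig A lam) *ᵥ x = ∑ i, lam i * (A i ⬝ᵥ x)^2 := by
  rw [sig_mulVec, dotProduct_sum']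
  refine Finset.sum_congr rfl fun i _ => ?_
  rw [dotProduct_smul, smul_eq_mul, dotProduct_comm]
  ring

lemma sig_herm (A : Matrix (Fin m) (Fin r) ℝ) (lam : Fin m → ℝ) :
    (Sig A lam).IsHermitian := by
  show _ = _
  ext k l
  rw [conjTranspose_apply, sig_apply, sig_apply, star_trivial]
  refine Finset.sum_congr rfl fun i _ => by ring

lemma sig_psd (A : Matrix (Fin m) (Fin r) ℝ) {lam : Fin m → ℝ} (hlam : ∀ i, 0 ≤ lam i) :
    (Sig A lam).PosSemidef := by
  refine posSemidef_iff_dotProduct_mulVec.mpr ⟨sig_herm A lam, fun x => ?_⟩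
  rw [star_trivial, sig_quad]
  exact Finset.sum_nonneg fun i _ => mul_nonneg (hlam i) (sq_nonneg _)

lemma sig_comb (A : Matrix (Fin m) (Fin r) ℝ) (lam : Fin m → ℝ) (i0 : Fin m) (t : ℝ) :
    Sig A ((1-t) • lam + t • (Pi.single i0 1 : Fin m → ℝ))
      = (1-t) • Sig A lam + t • vecMulVec (A i0) (A i0) := by
  have h : ∀ i, (((1-t) • lam + t • (Pi.single i0 1 : Fin m → ℝ)) i) • vecMulVec (A i) (A i)
      = (1-t) • (lam i • vecMulVec (A i) (A i))
        + (t * (Pi.single i0 1 : Fin m → ℝ) i) • vecMulVec (A i) (A i) := by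
    intro i
    rw [Pi.add_apply, Pi.smul_apply, Pi.smul_apply, add_smul, smul_smul, smul_eq_mul, smul_eq_mul]
  simp only [Sig, h, Finset.sum_add_distrib, ← Finset.smul_sum]
  congr 1
  rw [Finset.sum_eq_single i0]
  · simp
  · intro b _ hb
    simp [Pi.single_apply, hb]
  · simp

open scoped MatrixOrder

theorem gamma2_le_sqrt_rank_aux {m n : ℕ} (hm : 0 < m) (hn : 0 < n)
    (M : Matrix (Fin m) (Fin n) ℝ) (hM : ∀ i j, M i j = 1 ∨ M i j = -1) :
    gamma2 M ≤ Real.sqrt (M.rank) := by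
  classical
  haveI : Nonempty (Fin m) := ⟨⟨0, hm⟩⟩
  haveI : Nonempty (Fin n) := ⟨⟨0, hn⟩⟩
  set V := LinearMap.range M.mulVecLin with hVdef
  set r := M.rank with hrdef
  have hsq : ∀ i j, M i j ^ 2 = 1 := fun i j => by rcases hM i j with h | h <;> simp [h]
  have hfr : Module.finrank ℝ V = r := rfl
  let v : Module.Basis (Fin r) ℝ V := Module.finBasisOfFinrankEq ℝ V hfr
  let A : Matrix (Fin m) (Fin r) ℝ := Matrix.of fun i k => (v k : Fin m → ℝ) i
  have hcol : ∀ j, (fun i => M i j) ∈ V := by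
    intro j
    refine ⟨Pi.single j 1, ?_⟩
    show M *ᵥ Pi.single j 1 = _
    rw [M.mulVec_single]
    simp
    rfl
  let B : Matrix (Fin r) (Fin n) ℝ :=
    Matrix.of fun k j => v.repr ⟨fun i => M i j, hcol j⟩ k
  have hMAB : ∀ i j, M i j = A i ⬝ᵥ (fun k => B k j) := by
    intro i j
    have h1 := v.sum_repr ⟨fun i => M i j, hcol j⟩
    have h2 := congrFun (congrArg Subtype.val h1) i
    simp only [AddSubmonoidClass.coe_finset_sum, Submodule.coe_smul_of_tower,
      Finset.sum_apply, Pi.smul_apply, smul_eq_mul] at h2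
    rw [← h2, dotProduct]
    refine Finset.sum_congr rfl fun k _ => ?_
    simp [A, B, mul_comm]
  have hAB : M = A * B := by
    ext i j
    rw [mul_apply, hMAB i j, dotProduct]
  have hAinj : ∀ x : Fin r → ℝ, x ≠ 0 → A *ᵥ x ≠ 0 := by
    intro x hx hAx
    apply hx
    have hzero : ∑ k, x k • v k = 0 := by
      apply Subtype.val_injective
      rw [AddSubmonoidClass.coe_finset_sum]
      funext i
      have := congrFun hAx i
      simp only [mulVec, dotProduct] at this
      simpa [Finset.sum_apply, A, mul_comm] using this
    have hli := Fintype.linearIndependent_iff.mp v.linearIndependent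
    funext k
    exact hli x hzero k
  have hr1 : 1 ≤ r := by
    rcases Nat.eq_zero_or_pos r with h0 | h
    · exfalso
      have hbot : V = ⊥ := Submodule.finrank_eq_zero.mp (hfr.trans h0)
      have := hcol ⟨0, hn⟩
      rw [hbot, Submodule.mem_bot] at this
      have := congrFun this ⟨0, hm⟩
      have h1 := hsq ⟨0, hm⟩ ⟨0, hn⟩
      simp only [this] at h1
      norm_num at h1
    · exact h
  -- the uniform weight
  have hmemu : (fun _ : Fin m => (m:ℝ)⁻¹) ∈ stdSimplex ℝ (Fin m) := by
    constructor
    · intro i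
      positivity
    · simp only [Finset.sum_const, Finset.card_univ, Fintype.card_fin, nsmul_eq_mul]
      field_simp
  have hcont : Continuous fun lam : Fin m → ℝ => (Sig A lam).det := by
    apply Continuous.matrix_det
    apply continuous_matrix
    intro k l
    simp only [sig_apply]
    exact continuous_finset_sum _ fun i _ =>
      ((continuous_apply i).mul continuous_const)
  obtain ⟨lam, hlamS, hmax⟩ :=
    (isCompact_stdSimplex ℝ (Fin m)).exists_isMaxOn ⟨_, hmemu⟩ hcont.continuousOn
  have hposu : (Sig A (fun _ : Fin m => (m:ℝ)⁻¹)).PosDef := by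
    refine posDef_iff_dotProduct_mulVec.mpr ⟨sig_herm A _, fun x hx => ?_⟩
    rw [star_trivial, sig_quad]
    obtain ⟨i, hi⟩ : ∃ i, (A *ᵥ x) i ≠ 0 := by
      by_contra hc
      push_neg at hc
      exact hAinj x hx (funext hc)
    refine Finset.sum_pos' (fun i _ => by positivity) ⟨i, Finset.mem_univ i, ?_⟩
    have : A i ⬝ᵥ x ≠ 0 := hi
    have hm' : (0:ℝ) < (m:ℝ)⁻¹ := by positivity
    positivity
  have hD : 0 < (Sig A lam).det := lt_of_lt_of_le hposu.det_pos (hmax hmemu)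
  set SS := Sig A lam with hSSdef
  have hSSdet : IsUnit SS.det := hD.ne'.isUnit
  have hpsd : SS.PosSemidef := sig_psd A hlamS.1
  -- first-order condition
  have hq : ∀ i0, A i0 ⬝ᵥ SS⁻¹ *ᵥ A i0 ≤ (r:ℝ) := by
    intro i0
    apply poly_ineq hr1
    intro t ht
    have h1t : (0:ℝ) < 1 - t := by linarith [ht.2]
    have hsing : (Pi.single i0 1 : Fin m → ℝ) ∈ stdSimplex ℝ (Fin m) := by
      constructor
      · intro j
        rcases eq_or_ne j i0 with h | h <;> simp [Pi.single_apply, h]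
      · simp
    have hmem : ((1-t) • lam + t • (Pi.single i0 1 : Fin m → ℝ)) ∈ stdSimplex ℝ (Fin m) :=
      (convex_stdSimplex ℝ (Fin m)) hlamS hsing (by linarith) (le_of_lt ht.1) (by ring)
    have hle := hmax hmem
    simp only [Set.mem_setOf_eq] at hle
    rw [sig_comb, ← hSSdef,
      det_convex_comb SS hSSdet (A i0) ⟨le_of_lt ht.1, ht.2⟩] at hle
    set q := A i0 ⬝ᵥ SS⁻¹ *ᵥ A i0 with hqdef
    have h2 : (1-t)^r * (1 + (t/(1-t)) * q) ≤ 1 := by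
      have hle' : SS.det * ((1-t)^r * (1 + (t/(1-t)) * q)) ≤ SS.det * 1 := by
        simpa using hle
      exact le_of_mul_le_mul_left hle' hD
    have h3 : (1-t)^r * (1 + (t/(1-t)) * q) = (1-t)^(r-1) * (1 + t*(q-1)) := by
      have hrr : r = (r-1)+1 := (Nat.succ_pred_eq_of_pos hr1).symm
      rw [hrr, pow_succ]
      field_simp
      simp only [Nat.add_sub_cancel]
      ring
    rw [← h3]
    exact h2
  -- square root of SS
  set S0 := CFC.sqrt SS with hS0def
  have hS0sq : S0 * S0 = SS := CFC.sqrt_mul_sqrt_self SS hpsd.nonneg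
  have hS0herm : S0ᴴ = S0 := (CFC.sqrt_nonneg SS).posSemidef.1
  have hS0det : IsUnit S0.det := by
    have hdd : S0.det * S0.det = SS.det := by rw [← det_mul, hS0sq]
    have hne : S0.det ≠ 0 := by
      intro h
      rw [h, mul_zero] at hdd
      exact hD.ne' hdd.symm
    exact hne.isUnit
  have hS0inv : S0⁻¹ * S0⁻¹ = SS⁻¹ := by rw [← Matrix.mul_inv_rev, hS0sq]
  set A' := A * S0⁻¹ with hA'def
  set B' := S0 * B with hB'def
  have hfact : M = A' * B' := by
    rw [hAB, hA'def, hB'def, Matrix.mul_assoc, Matrix.nonsing_inv_mul_cancel_left _ _ hS0det]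
  have hrowsum : ∀ i, ∑ k, (A' i k)^2 = A i ⬝ᵥ SS⁻¹ *ᵥ A i := by
    intro i
    have h1 : ∑ k, (A' i k)^2 = (A' * A'ᴴ) i i := by
      rw [mul_apply]
      refine Finset.sum_congr rfl fun k _ => ?_
      simp [conjTranspose_apply, sq]
    rw [h1]
    have h2 : A' * A'ᴴ = A * SS⁻¹ * Aᴴ := by
      rw [hA'def, conjTranspose_mul, conjTranspose_nonsing_inv, hS0herm,
        Matrix.mul_assoc A S0⁻¹ _, ← Matrix.mul_assoc S0⁻¹ S0⁻¹ Aᴴ,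
        ← Matrix.mul_assoc A (S0⁻¹ * S0⁻¹) Aᴴ, hS0inv]
    rw [h2, diag_AXAH]
  have hcolsum : ∀ j, ∑ k, (B' k j)^2 = 1 := by
    intro j
    have h1 : ∑ k, (B' k j)^2 = (B'ᴴ * B') j j := by
      rw [mul_apply]
      refine Finset.sum_congr rfl fun k _ => ?_
      simp [conjTranspose_apply, sq]
    rw [h1]
    have h2 : B'ᴴ * B' = Bᴴ * SS * B := by
      rw [hB'def, conjTranspose_mul, hS0herm, Matrix.mul_assoc Bᴴ S0 _,
        ← Matrix.mul_assoc S0 S0 B, hS0sq, ← Matrix.mul_assoc]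
    rw [h2, diag_BHXB, hSSdef, sig_quad]
    have hterm : ∀ i, lam i * ((A i) ⬝ᵥ (fun k => B k j))^2 = lam i := by
      intro i
      rw [← hMAB i j, hsq i j, mul_one]
    rw [Finset.sum_congr rfl (fun i _ => hterm i)]
    exact hlamS.2
  have hg : gamma2 M ≤ rowNormMax A' * colNormMax B' :=
    csInf_le (gamma2_bddBelow M) ⟨r, A', B', hfact, rfl⟩
  refine le_trans hg ?_
  have hrow : rowNormMax A' ≤ Real.sqrt r := by
    unfold rowNormMax
    refine ciSup_le fun i => ?_
    refine Real.sqrt_le_sqrt ?_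
    rw [hrowsum i]
    exact hq i
  have hcol1 : colNormMax B' ≤ 1 := by
    unfold colNormMax
    refine ciSup_le fun j => ?_
    rw [hcolsum j, Real.sqrt_one]
  calc rowNormMax A' * colNormMax B' ≤ Real.sqrt r * 1 :=
        mul_le_mul hrow hcol1 (colNormMax_nonneg B') (Real.sqrt_nonneg _)
    _ = Real.sqrt r := mul_one _

/-- `γ₂` respects equality of matrices, and for any sign matrix `M` (entries `±1`),
`γ₂(M) ≤ √(rank M)`. -/
theorem gamma2_congr_and_le_sqrt_rank {m n : ℕ} (M : Matrix (Fin m) (Fin n) ℝ) :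
    (∀ N : Matrix (Fin m) (Fin n) ℝ, M = N → gamma2 M = gamma2 N) ∧
    ((∀ i j, M i j = 1 ∨ M i j = -1) → gamma2 M ≤ Real.sqrt (M.rank)) := by
  constructor
  · intro N h
    rw [h]
  · intro hM
    rcases Nat.eq_zero_or_pos m with hm | hm
    · subst hm
      have h0 : gamma2 M ≤ rowNormMax (0 : Matrix (Fin 0) (Fin 0) ℝ)
          * colNormMax (0 : Matrix (Fin 0) (Fin n) ℝ) :=
        csInf_le (gamma2_bddBelow M) ⟨0, 0, 0, by ext i j; exact i.elim0, rfl⟩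
      have hz : rowNormMax (0 : Matrix (Fin 0) (Fin 0) ℝ) = 0 := by
        unfold rowNormMax
        exact Real.iSup_of_isEmpty _
      rw [hz, zero_mul] at h0
      exact le_trans h0 (Real.sqrt_nonneg _)
    rcases Nat.eq_zero_or_pos n with hn | hn
    · subst hn
      have h0 : gamma2 M ≤ rowNormMax (0 : Matrix (Fin m) (Fin 0) ℝ)
          * colNormMax (0 : Matrix (Fin 0) (Fin 0) ℝ) :=
        csInf_le (gamma2_bddBelow M) ⟨0, 0, 0, by ext i j; exact j.elim0, rfl⟩
      have hz : colNormMax (0 : Matrix (Fin 0) (Fin 0) ℝ) = 0 := by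
        unfold colNormMax
        exact Real.iSup_of_isEmpty _
      rw [hz, mul_zero] at h0
      exact le_trans h0 (Real.sqrt_nonneg _)
    exact gamma2_le_sqrt_rank_aux hm hn M hM
end
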